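/- Let f be an unbounded modulus function and suppose there exists ξ > 0 such that g_f(k) := limsup_{n → ∞} f(n)/f(2^k n) > ξ for every k ∈ ℕ. Then there exists a set A ⊆ ℕ whose natural density is zero but for which limsup_{n → ∞} f(α_A(n))/f(n) ≥ ξ; in particular A belongs to the statistical ideal 𝔍_s but not to the f-ideal 𝔍_f, so 𝔍_s ≠ 𝔍_f. -/

import Mathlib

open Filter Set Topology

/-- `f : ℝ → ℝ` (viewed on `ℝ⁺`) is an unbounded modulus function. -/
def IsModulus (f : ℝ → ℝ) : Prop :=
  (∀ x : ℝ, 0 ≤ x → 0 ≤ f x) ∧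
  (∀ x : ℝ, 0 ≤ x → (f x = 0 ↔ x = 0)) ∧
  (∀ x y : ℝ, 0 ≤ x → 0 ≤ y → f (x + y) ≤ f x + f y) ∧
  (∀ x y : ℝ, 0 ≤ x → x ≤ y → f x ≤ f y) ∧
  ContinuousWithinAt f (Set.Ici 0) 0 ∧
  Tendsto (fun n : ℕ => f n) atTop atTop

/-- `α_A(n) = |A ∩ [1,n]|`. -/
noncomputable def alphaCount (A : Set ℕ) (n : ℕ) : ℕ := (A ∩ Set.Icc 1 n).ncard

/-- The statistical ideal: sets of natural density zero. -/
def statIdeal : Set (Set ℕ) :=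
  {A | Tendsto (fun n : ℕ => (alphaCount A n : ℝ) / n) atTop (nhds 0)}

/-- The `f`-ideal: sets of `f`-density zero. -/
def fIdeal (f : ℝ → ℝ) : Set (Set ℕ) :=
  {A | Tendsto (fun n : ℕ => f (alphaCount A n) / f n) atTop (nhds 0)}

/-- `g_f(k) = limsup_n f(n)/f(2^k n)`. -/
noncomputable def gmod (f : ℝ → ℝ) (k : ℕ) : ℝ :=
  Filter.limsup (fun n : ℕ => f n / f (2 ^ k * n)) atTop

/-- `h_f(t) = limsup_n f(n)/f(t n)` for real `t`. -/
noncomputable def hmod (f : ℝ → ℝ) (t : ℝ) : ℝ :=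
  Filter.limsup (fun n : ℕ => f n / f (t * n)) atTop

private lemma ncard_Icc_nat (a b : ℕ) : (Set.Icc a b).ncard = b + 1 - a := by
  rw [← Finset.coe_Icc, Set.ncard_coe_finset, Nat.card_Icc]

private lemma alphaCount_le_self (A : Set ℕ) (n : ℕ) : alphaCount A n ≤ n := by
  have h1 : (A ∩ Set.Icc 1 n).ncard ≤ (Set.Icc 1 n).ncard :=
    Set.ncard_le_ncard inter_subset_right (Set.finite_Icc _ _)
  rw [_root_.ncard_Icc_nat] at h1
  simpa [alphaCount] using h1

theorem exists_statIdeal_not_fIdeal (f : ℝ → ℝ) (hf : IsModulus f) (ξ : ℝ) (hξ : 0 < ξ)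
    (h : ∀ k : ℕ, 1 ≤ k → ξ < gmod f k) :
    ∃ A : Set ℕ,
      Tendsto (fun n : ℕ => (alphaCount A n : ℝ) / n) atTop (nhds 0) ∧
      ξ ≤ Filter.limsup (fun n : ℕ => f (alphaCount A n) / f n) atTop ∧
      A ∈ statIdeal ∧ A ∉ fIdeal f ∧ statIdeal ≠ fIdeal f := by
  obtain ⟨hf0, hfz, hfsub, hfmono, hfc, hftop⟩ := hf
  have hf1 : 0 < f 1 := by
    rcases (hf0 1 zero_le_one).lt_or_eq with h1 | h1
    · exact h1
    · exact absurd ((hfz 1 zero_le_one).1 h1.symm) one_ne_zero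
  have hfpos : ∀ x : ℝ, 1 ≤ x → 0 < f x := fun x hx =>
    lt_of_lt_of_le hf1 (hfmono 1 x zero_le_one hx)
  -- extraction of good n's
  have key : ∀ k M : ℕ, ∃ n : ℕ, M ≤ n ∧ (1 ≤ k → ξ < f n / f (2 ^ k * n)) := by
    intro k M
    by_cases hk : 1 ≤ k
    · have hcb : IsCoboundedUnder (· ≤ ·) atTop (fun n : ℕ => f n / f (2 ^ k * n)) := by
        refine (isBoundedUnder_of_eventually_ge (a := (0 : ℝ)) ?_).isCoboundedUnder_le
        exact Eventually.of_forall fun n =>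
          div_nonneg (hf0 _ (Nat.cast_nonneg n)) (hf0 _ (by positivity))
      have hh := h k hk
      simp only [gmod] at hh
      have hfreq : ∃ᶠ n : ℕ in atTop, ξ < f n / f (2 ^ k * n) :=
        frequently_lt_of_lt_limsup hcb hh
      obtain ⟨n, hn1, hn2⟩ := (frequently_atTop.mp hfreq) M
      exact ⟨n, hn1, fun _ => hn2⟩
    · exact ⟨M, le_rfl, fun h1 => absurd h1 hk⟩
  choose g hg1 hg2 using key
  -- the recursively defined sequence
  set ns : ℕ → ℕ := fun k => Nat.rec 1 (fun k ih => g (k + 1) (2 ^ k * ih + 1)) k with hns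
  have hns0 : ns 0 = 1 := rfl
  have hnssucc : ∀ k, ns (k + 1) = g (k + 1) (2 ^ k * ns k + 1) := fun k => rfl
  obtain ⟨m, hm⟩ : ∃ m : ℕ → ℕ, ∀ k, m k = 2 ^ k * ns k := ⟨_, fun _ => rfl⟩
  have hstep : ∀ k, m k + 1 ≤ ns (k + 1) := by
    intro k; rw [hnssucc, hm]; exact hg1 _ _
  have hns1 : ∀ k, 1 ≤ ns k := by
    intro k
    cases k with
    | zero => exact le_refl 1
    | succ k => have := hstep k; omega
  have hn_le_m : ∀ k, ns k ≤ m k := by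
    intro k; rw [hm]; exact Nat.le_mul_of_pos_left _ (Nat.pow_pos (n := k) two_pos)
  have hratio : ∀ k, 1 ≤ k → ξ < f (ns k) / f (2 ^ k * ns k) := by
    intro k hk
    cases k with
    | zero => omega
    | succ k => rw [hnssucc]; exact hg2 (k + 1) _ (by omega)
  have hmlt : ∀ k, m k < m (k + 1) := by
    intro k
    have h1 := hstep k
    have h2 := hn_le_m (k + 1)
    omega
  have hmsm : StrictMono m := strictMono_nat_of_lt_succ hmlt
  have hm_ge : ∀ k, 2 ^ k ≤ m k := by
    intro k; rw [hm]; exact Nat.le_mul_of_pos_right _ (hns1 k)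
  have hm0 : m 0 = 1 := by simp [hm, hns0]
  have hm1le : ∀ k, 1 ≤ m k := by
    intro k; have := hm_ge k; have := Nat.one_le_two_pow (n := k); omega
  -- the set A
  set A : Set ℕ := {x : ℕ | ∃ k, 1 ≤ k ∧ m k - ns k < x ∧ x ≤ m k} with hA
  -- blocks are far apart
  have hblock' : ∀ i j, i < j → m i < m j - ns j := by
    intro i j hij
    cases j with
    | zero => omega
    | succ j =>
      have h1 := hstep j
      have h2 : 2 * ns (j + 1) ≤ m (j + 1) := by
        rw [hm]
        refine Nat.mul_le_mul_right _ ?_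
        have : (2 : ℕ) ^ 1 ≤ 2 ^ (j + 1) := Nat.pow_le_pow_right (by norm_num) (by omega)
        simpa using this
      have h3 : m i ≤ m j := hmsm.monotone (by omega)
      omega
  -- covering lemma
  have hcover : ∀ k n, n ≤ m (k + 1) →
      A ∩ Set.Icc 1 n ⊆ (A ∩ Set.Icc 1 (m k)) ∪ Set.Icc (m (k + 1) - ns (k + 1) + 1) n := by
    intro k n hn x hx
    obtain ⟨⟨j, hj1, hjl, hjr⟩, hx1, hxn⟩ := hx
    by_cases hxm : x ≤ m k
    · exact Or.inl ⟨⟨j, hj1, hjl, hjr⟩, hx1, hxm⟩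
    · push_neg at hxm
      right
      have hj_le : ¬ j ≤ k := by
        intro hle
        exact absurd (hjr.trans (hmsm.monotone hle)) (not_le.mpr hxm)
      have hj_ge : ¬ k + 1 < j := by
        intro hge
        have h1 := hblock' (k + 1) j hge
        omega
      have hjk : j = k + 1 := by omega
      subst hjk
      exact ⟨by omega, hxn⟩
  -- cardinality consequence
  have hcount : ∀ k n, n ≤ m (k + 1) →
      alphaCount A n ≤ alphaCount A (m k) + (n + 1 - (m (k + 1) - ns (k + 1) + 1)) := by
    intro k n hn
    have hfin : ((A ∩ Set.Icc 1 (m k)) ∪ Set.Icc (m (k + 1) - ns (k + 1) + 1) n).Finite :=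
      ((Set.finite_Icc 1 (m k)).inter_of_right A).union (Set.finite_Icc _ _)
    have h1 := Set.ncard_le_ncard (hcover k n hn) hfin
    have h2 := Set.ncard_union_le (A ∩ Set.Icc 1 (m k)) (Set.Icc (m (k + 1) - ns (k + 1) + 1) n)
    rw [_root_.ncard_Icc_nat] at h2
    calc alphaCount A n = (A ∩ Set.Icc 1 n).ncard := rfl
      _ ≤ _ := h1
      _ ≤ _ := h2
  -- lower bound at block ends
  have hαlow : ∀ k, 1 ≤ k → ns k ≤ alphaCount A (m k) := by
    intro k hk
    have hsub : Set.Icc (m k - ns k + 1) (m k) ⊆ A ∩ Set.Icc 1 (m k) := by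
      intro x hx
      obtain ⟨hx1, hx2⟩ := hx
      exact ⟨⟨k, hk, by omega, hx2⟩, by omega, hx2⟩
    have h1 := Set.ncard_le_ncard hsub ((Set.finite_Icc 1 (m k)).inter_of_right A)
    rw [_root_.ncard_Icc_nat] at h1
    have h2 := hn_le_m k
    have h3 := hm1le k
    calc ns k = m k + 1 - (m k - ns k + 1) := by omega
      _ ≤ (A ∩ Set.Icc 1 (m k)).ncard := h1
  -- upper bound at block ends
  have h2m : ∀ k, 2 * ns k ≤ m k + 1 := by
    intro k
    cases k with
    | zero => rw [hm0, hns0]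
    | succ k =>
      have h2 : 2 * ns (k + 1) ≤ m (k + 1) := by
        rw [hm]
        refine Nat.mul_le_mul_right _ ?_
        have : (2 : ℕ) ^ 1 ≤ 2 ^ (k + 1) := Nat.pow_le_pow_right (by norm_num) (by omega)
        simpa using this
      omega
  have hαm : ∀ k, alphaCount A (m k) ≤ 2 * ns k := by
    intro k
    induction k with
    | zero =>
      rw [hm0, hns0]
      have := alphaCount_le_self A 1
      omega
    | succ k ih =>
      have h1 := hcount k (m (k + 1)) le_rfl
      have h2 := hn_le_m (k + 1)
      have h3 := hstep k
      have h4 := h2m k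
      omega
  -- the key density estimate (in ℕ)
  have hdens : ∀ k n, m k < n → n ≤ m (k + 1) → 2 ^ k * alphaCount A n ≤ 3 * n := by
    intro k n h1 h2
    have hc := hcount k n h2
    have hαk := hαm k
    have hX := hn_le_m (k + 1)
    set p : ℕ := 2 ^ k * ns (k + 1) with hp_def
    have hp : p + ns (k + 1) ≤ m (k + 1) := by
      have e : m (k + 1) = p + p := by rw [hm, hp_def, pow_succ]; ring
      have hx : ns (k + 1) ≤ p := Nat.le_mul_of_pos_left _ (Nat.pow_pos (n := k) two_pos)
      omega
    by_cases hcase : n ≤ m (k + 1) - ns (k + 1)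
    · have ha : alphaCount A n ≤ 2 * ns k := by omega
      calc 2 ^ k * alphaCount A n ≤ 2 ^ k * (2 * ns k) := Nat.mul_le_mul_left _ ha
        _ = 2 * m k := by rw [hm]; ring
        _ ≤ 3 * n := by omega
    · push_neg at hcase
      have ha : alphaCount A n ≤ 2 * ns k + ns (k + 1) := by omega
      calc 2 ^ k * alphaCount A n ≤ 2 ^ k * (2 * ns k + ns (k + 1)) := Nat.mul_le_mul_left _ ha
        _ = 2 * m k + p := by rw [hm, hp_def]; ring
        _ ≤ 3 * n := by omega
  -- the density estimate in ℝ
  have hdens_real : ∀ k n, m k < n → n ≤ m (k + 1) → (alphaCount A n : ℝ) / n ≤ 3 / 2 ^ k := by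
    intro k n h1 h2
    have h3 := hdens k n h1 h2
    have hn0 : (0 : ℝ) < n := by
      have := hm1le k
      exact_mod_cast Nat.cast_pos.mpr (by omega)
    rw [div_le_div_iff₀ hn0 (by positivity : (0 : ℝ) < 2 ^ k)]
    calc (alphaCount A n : ℝ) * 2 ^ k = ((2 ^ k * alphaCount A n : ℕ) : ℝ) := by
          push_cast; ring
      _ ≤ ((3 * n : ℕ) : ℝ) := Nat.cast_le.mpr h3
      _ = 3 * n := by push_cast; ring
  -- density tends to zero
  have hTend : Tendsto (fun n : ℕ => (alphaCount A n : ℝ) / n) atTop (nhds 0) := by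
    rw [Metric.tendsto_atTop]
    intro ε hε
    obtain ⟨K, hK⟩ : ∃ K : ℕ, 3 / (2 : ℝ) ^ K < ε := by
      obtain ⟨K, hK⟩ := pow_unbounded_of_one_lt (3 / ε) (one_lt_two (α := ℝ))
      refine ⟨K, ?_⟩
      rw [div_lt_iff₀ (by positivity)]
      rw [div_lt_iff₀ hε] at hK
      linarith
    refine ⟨m K + 1, fun n hn => ?_⟩
    have hex : ∃ j, n ≤ m j := by
      refine ⟨n, ?_⟩
      have h1 := hm_ge n
      have h2 := Nat.lt_two_pow_self (n := n)
      omega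
    have hj2 : n ≤ m (Nat.find hex) := Nat.find_spec hex
    have hj0 : Nat.find hex ≠ 0 := by
      intro h0
      rw [h0, hm0] at hj2
      have := hm1le K
      omega
    obtain ⟨i, hi⟩ : ∃ i, Nat.find hex = i + 1 := ⟨Nat.find hex - 1, by omega⟩
    rw [hi] at hj2
    have hlt : m i < n := by
      have := Nat.find_min hex (m := i) (by omega)
      omega
    have hKi : K ≤ i := by
      have h1 : m K < m (i + 1) := lt_of_lt_of_le (by omega) hj2
      have := hmsm.lt_iff_lt.mp h1
      omega
    have hb := hdens_real i n hlt hj2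
    rw [Real.dist_eq, sub_zero, abs_of_nonneg (by positivity)]
    calc (alphaCount A n : ℝ) / n ≤ 3 / 2 ^ i := hb
      _ ≤ 3 / 2 ^ K := by
          apply div_le_div_of_nonneg_left (by norm_num) (by positivity)
          exact pow_le_pow_right₀ (by norm_num) hKi
      _ < ε := hK
  -- boundedness of the f-ratio
  have hBdd : IsBoundedUnder (· ≤ ·) atTop (fun n : ℕ => f (alphaCount A n) / f n) := by
    refine isBoundedUnder_of_eventually_le (a := (1 : ℝ)) ?_
    filter_upwards [eventually_ge_atTop 1] with n hn
    have hfa : f (alphaCount A n) ≤ f n :=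
      hfmono _ _ (Nat.cast_nonneg _) (Nat.cast_le.mpr (alphaCount_le_self A n))
    exact div_le_one_of_le₀ hfa (hf0 _ (Nat.cast_nonneg n))
  -- frequent large values of the f-ratio
  have hfreq : ∃ᶠ n in atTop, ξ ≤ f (alphaCount A n) / f n := by
    rw [frequently_atTop]
    intro N
    refine ⟨m (N + 1), ?_, ?_⟩
    · have h1 := hm_ge (N + 1)
      have h2 := Nat.lt_two_pow_self (n := N)
      have h3 : (2 : ℕ) ^ N ≤ 2 ^ (N + 1) := Nat.pow_le_pow_right (by norm_num) (by omega)
      omega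
    · have h1 := hratio (N + 1) (by omega)
      have hα := hαlow (N + 1) (by omega)
      have hc : ((m (N + 1) : ℕ) : ℝ) = 2 ^ (N + 1) * (ns (N + 1) : ℝ) := by
        rw [hm]; push_cast; ring
      have h1ns : (1 : ℝ) ≤ (ns (N + 1) : ℝ) := by exact_mod_cast hns1 (N + 1)
      have hden : 0 < f (2 ^ (N + 1) * (ns (N + 1) : ℝ)) := by
        apply hfpos
        calc (1 : ℝ) ≤ ns (N + 1) := h1ns
          _ = 1 * (ns (N + 1) : ℝ) := by ring
          _ ≤ 2 ^ (N + 1) * (ns (N + 1) : ℝ) := by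
              apply mul_le_mul_of_nonneg_right _ (by positivity)
              exact one_le_pow₀ (by norm_num : (1:ℝ) ≤ 2)
      have hnum : f (ns (N + 1)) ≤ f (alphaCount A (m (N + 1))) :=
        hfmono _ _ (Nat.cast_nonneg _) (Nat.cast_le.mpr hα)
      rw [hc]
      calc ξ ≤ f (ns (N + 1)) / f (2 ^ (N + 1) * (ns (N + 1) : ℝ)) := h1.le
        _ ≤ f (alphaCount A (m (N + 1))) / f (2 ^ (N + 1) * (ns (N + 1) : ℝ)) := by
            gcongr
  have hlimsup : ξ ≤ Filter.limsup (fun n : ℕ => f (alphaCount A n) / f n) atTop :=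
    le_limsup_of_frequently_le hfreq hBdd
  have hnot : A ∉ fIdeal f := by
    intro hAf
    have hT : Tendsto (fun n : ℕ => f (alphaCount A n) / f n) atTop (nhds 0) := hAf
    have heq : Filter.limsup (fun n : ℕ => f (alphaCount A n) / f n) atTop = 0 :=
      hT.limsup_eq
    rw [heq] at hlimsup
    exact absurd hlimsup (not_le.mpr hξ)
  have hmem : A ∈ statIdeal := hTend
  have hne : statIdeal ≠ fIdeal f := by
    intro he
    exact hnot (he ▸ hmem)
  exact ⟨A, hTend, hlimsup, hmem, hnot, hne⟩
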